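/- Radial weighted Poincaré inequality with mean-zero condition (mode k = 0): For every C¹ function v : (0,1) → ℝ such that ∫₀¹ (1−r²) v′(r)² (1−r²)^α r^{N−1} dr < ∞ and ∫₀¹ v(r)² (1−r²)^α r^{N−1} dr < ∞, if ∫₀¹ v(r) (1−r²)^α r^{N−1} dr = 0, then ∫₀¹ (1−r²) v′(r)² (1−r²)^α r^{N−1} dr ≥ (2(3p+1)/(p−1)) ∫₀¹ v(r)² (1−r²)^α r^{N−1} dr. -/

import Mathlib

open MeasureTheory Set Filter Topology

set_option maxHeartbeats 1000000

noncomputable section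

/-- The exponent `α = 2/(p−1) − (N−1)/2`. -/
def alphaExp (N : ℕ) (p : ℝ) : ℝ := 2 / (p - 1) - ((N : ℝ) - 1) / 2


lemma aux_deriv {α n a L : ℝ} (hL : L = n + 2*α + 2) (haL : a * L = n)
    {u : ℝ → ℝ} {r d : ℝ} (hr0 : 0 < r) (hr1 : r < 1) (hra : a - r^2 ≠ 0)
    (hu : HasDerivAt u d r) :
    HasDerivAt (fun x => (1 - x^2) ^ (α+1) * x ^ (n-1) * ((-2*x)/(a - x^2)) * u x ^ 2)
      ((1 - r^2) * d^2 * (1 - r^2)^α * r^(n-1)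
        - 2*L * (u r^2 * (1 - r^2)^α * r^(n-1))
        - (1 - r^2)^(α+1) * r^(n-1) * (d - ((-2*r)/(a - r^2)) * u r)^2) r := by
  have h1r : (0:ℝ) < 1 - r^2 := by nlinarith
  have hbase : HasDerivAt (fun x : ℝ => 1 - x^2) (-(2*r)) r := by
    simpa using (hasDerivAt_pow 2 r).const_sub 1
  have hA : HasDerivAt (fun x : ℝ => (1 - x^2) ^ (α+1))
      ((α+1) * (1-r^2)^α * (-(2*r))) r := by
    have := hbase.rpow_const (p := α+1) (Or.inl h1r.ne')
    have e : α + 1 - 1 = α := by ring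
    rw [e] at this
    convert this using 1
    ring
  have hB : HasDerivAt (fun x : ℝ => x ^ (n-1)) ((n-1) * (r^(n-1) / r)) r := by
    have := Real.hasDerivAt_rpow_const (x := r) (p := n-1) (Or.inl hr0.ne')
    have h2 : r ^ (n-1-1) = r ^ (n-1) / r := by
      rw [show n-1-1 = (n-1) - 1 by ring, Real.rpow_sub hr0, Real.rpow_one]
    rw [h2] at this
    exact this
  have hC : HasDerivAt (fun x : ℝ => (-2*x)/(a - x^2))
      (((-2)*(a - r^2) - (-2*r)*(-(2*r)))/(a - r^2)^2) r := by
    have hnum : HasDerivAt (fun x : ℝ => -2*x) (-2) r := by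
      simpa using (hasDerivAt_id r).const_mul (-2 : ℝ)
    have hden : HasDerivAt (fun x : ℝ => a - x^2) (-(2*r)) r := by
      simpa using (hasDerivAt_pow 2 r).const_sub a
    exact hnum.div hden hra
  have hD : HasDerivAt (fun x => u x ^ 2) (2 * u r * d) r := by
    simpa using hu.fun_pow 2
  have h := ((hA.fun_mul hB).fun_mul hC).fun_mul hD
  refine h.congr_deriv ?_
  have hpow : (1 - r^2) ^ (α+1) = (1-r^2)^α * (1-r^2) := by
    rw [Real.rpow_add h1r, Real.rpow_one]
  have hn : n = a * L := haL.symm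
  have hα : α = (L - a*L - 2)/2 := by
    rw [hn] at hL; linarith
  rw [hpow, hn, hα]
  field_simp
  ring


lemma ftc_ineq {α n a L : ℝ} (hL : L = n + 2*α + 2) (haL : a * L = n)
    {u u' : ℝ → ℝ}
    (hud : ∀ x ∈ Ioo (0:ℝ) 1, HasDerivAt u (u' x) x)
    (hu'c : ContinuousOn u' (Ioo (0:ℝ) 1))
    {s t : ℝ} (hst : s ≤ t) (hsub : Icc s t ⊆ Ioo (0:ℝ) 1)
    (hne : ∀ x ∈ Icc s t, a - x^2 ≠ 0) :
    (1 - t^2)^(α+1) * t^(n-1) * ((-2*t)/(a - t^2)) * u t ^ 2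
      - (1 - s^2)^(α+1) * s^(n-1) * ((-2*s)/(a - s^2)) * u s ^ 2
    ≤ ∫ x in s..t, ((1 - x^2) * u' x ^2 * (1-x^2)^α * x^(n-1)
        - 2*L*(u x^2 * (1-x^2)^α * x^(n-1))) := by
  set G : ℝ → ℝ := fun x => (1 - x^2)^(α+1) * x^(n-1) * ((-2*x)/(a - x^2)) * u x ^ 2 with hG
  set f : ℝ → ℝ := fun x => (1 - x^2) * u' x ^2 * (1-x^2)^α * x^(n-1)
      - 2*L*(u x^2 * (1-x^2)^α * x^(n-1)) with hf
  set R : ℝ → ℝ := fun x => (1 - x^2)^(α+1) * x^(n-1)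
      * (u' x - ((-2*x)/(a-x^2)) * u x)^2 with hR
  -- continuity facts on Icc s t
  have huc : ContinuousOn u (Icc s t) := fun x hx =>
    ((hud x (hsub hx)).continuousAt).continuousWithinAt
  have hu'c' : ContinuousOn u' (Icc s t) := hu'c.mono hsub
  have hbpos : ∀ x ∈ Icc s t, (0:ℝ) < 1 - x^2 := by
    intro x hx; have := hsub hx; rcases this with ⟨h0, h1⟩; nlinarith
  have hxpos : ∀ x ∈ Icc s t, (0:ℝ) < x := fun x hx => (hsub hx).1
  have hc1 : ∀ β : ℝ, ContinuousOn (fun x : ℝ => (1 - x^2)^β) (Icc s t) := by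
    intro β
    apply ContinuousOn.rpow_const
    · exact (continuous_const.sub (continuous_pow 2)).continuousOn
    · exact fun x hx => Or.inl (hbpos x hx).ne'
  have hc2 : ContinuousOn (fun x : ℝ => x^(n-1)) (Icc s t) := by
    apply ContinuousOn.rpow_const continuousOn_id
    exact fun x hx => Or.inl (hxpos x hx).ne'
  have hc3 : ContinuousOn (fun x : ℝ => (-2*x)/(a - x^2)) (Icc s t) := by
    apply ContinuousOn.div
    · exact (continuous_const.mul continuous_id).continuousOn
    · exact (continuous_const.sub (continuous_pow 2)).continuousOn
    · exact hne
  have hfc : ContinuousOn f (Icc s t) := by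
    apply ContinuousOn.sub
    · exact (((((continuous_const.sub (continuous_pow 2)).continuousOn).mul
        (hu'c'.pow 2)).mul (hc1 α)).mul hc2)
    · exact continuousOn_const.mul (((huc.pow 2).mul (hc1 α)).mul hc2)
  have hRc : ContinuousOn R (Icc s t) := by
    exact ((hc1 (α+1)).mul hc2).mul ((hu'c'.sub (hc3.mul huc)).pow 2)
  have hgc : ContinuousOn (fun x => f x - R x) (Icc s t) := hfc.sub hRc
  have huIcc : uIcc s t = Icc s t := uIcc_of_le hst
  -- derivative of G
  have hGd : ∀ x ∈ uIcc s t, HasDerivAt G (f x - R x) x := by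
    intro x hx
    rw [huIcc] at hx
    have hx' := hsub hx
    have h0 := aux_deriv hL haL hx'.1 hx'.2 (hne x hx) (hud x hx')
    have heq : f x - R x = ((1 - x^2) * u' x ^2 * (1-x^2)^α * x^(n-1)
        - 2*L * (u x^2 * (1-x^2)^α * x^(n-1))
        - (1 - x^2)^(α+1) * x^(n-1) * (u' x - ((-2*x)/(a - x^2)) * u x)^2) := by
      simp only [hf, hR]; try ring
    rw [heq]; exact h0
  have hgint : IntervalIntegrable (fun x => f x - R x) volume s t := by
    rw [huIcc] at *
    exact hgc.intervalIntegrable_of_Icc hst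
  have hftc := intervalIntegral.integral_eq_sub_of_hasDerivAt hGd hgint
  have hfint : IntervalIntegrable f volume s t := by
    rw [huIcc] at *
    exact hfc.intervalIntegrable_of_Icc hst
  have hRint : IntervalIntegrable R volume s t := by
    rw [huIcc] at *
    exact hRc.intervalIntegrable_of_Icc hst
  have hsplit : (∫ x in s..t, (f x - R x)) = (∫ x in s..t, f x) - ∫ x in s..t, R x :=
    intervalIntegral.integral_sub hfint hRint
  have hRnn : 0 ≤ ∫ x in s..t, R x := by
    apply intervalIntegral.integral_nonneg hst
    intro x hx
    have hb := hbpos x hx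
    have hxp := hxpos x hx
    have : (0:ℝ) ≤ (1 - x^2)^(α+1) := Real.rpow_nonneg hb.le _
    have : (0:ℝ) ≤ x^(n-1) := Real.rpow_nonneg hxp.le _
    positivity
  calc G t - G s = (∫ x in s..t, f x) - ∫ x in s..t, R x := by rw [← hftc]; exact hsplit
    _ ≤ ∫ x in s..t, f x := by linarith


lemma G_tendsto {α n a d : ℝ} (ha0 : 0 < a) (ha1 : a < 1) {u : ℝ → ℝ}
    (hu : HasDerivAt u d (Real.sqrt a)) (hu0 : u (Real.sqrt a) = 0) :
    Tendsto (fun x => (1 - x^2)^(α+1) * x^(n-1) * ((-2*x)/(a - x^2)) * u x ^ 2)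
      (𝓝[≠] (Real.sqrt a)) (𝓝 0) := by
  set r₀ := Real.sqrt a with hr₀def
  have hr₀ : 0 < r₀ := Real.sqrt_pos.2 ha0
  have hr₀2 : r₀^2 = a := Real.sq_sqrt ha0.le
  have hr₀1 : r₀ < 1 := by
    rw [hr₀def]; rw [Real.sqrt_lt' one_pos]; nlinarith
  have hb : (0:ℝ) < 1 - r₀^2 := by nlinarith
  have hslope : Tendsto (slope u r₀) (𝓝[≠] r₀) (𝓝 d) :=
    hasDerivAt_iff_tendsto_slope.1 hu
  have hcont : Tendsto (fun x : ℝ => (1 - x^2)^(α+1) * x^(n-1) * (-2*x) * ((r₀ - x)/(r₀ + x)))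
      (𝓝 r₀) (𝓝 0) := by
    have hca : ContinuousAt
        (fun x : ℝ => (1 - x^2)^(α+1) * x^(n-1) * (-2*x) * ((r₀ - x)/(r₀ + x))) r₀ := by
      have h1 : ContinuousAt (fun x : ℝ => (1 - x^2)^(α+1)) r₀ := by
        have h0' : ContinuousAt (fun x : ℝ => 1 - x^2) r₀ := by fun_prop
        exact h0'.rpow_const (Or.inl hb.ne')
      have h2 : ContinuousAt (fun x : ℝ => x^(n-1)) r₀ :=
        Real.continuousAt_rpow_const r₀ (n-1) (Or.inl hr₀.ne')
      have h3 : ContinuousAt (fun x : ℝ => -2*x) r₀ := by fun_prop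
      have h4 : ContinuousAt (fun x : ℝ => (r₀ - x)/(r₀ + x)) r₀ := by
        apply ContinuousAt.div (by fun_prop) (by fun_prop)
        positivity
      exact ((h1.mul h2).mul h3).mul h4
    have := hca.tendsto
    simpa using this
  have hmain : Tendsto (fun x => ((1 - x^2)^(α+1) * x^(n-1) * (-2*x) * ((r₀ - x)/(r₀ + x)))
      * (slope u r₀ x)^2) (𝓝[≠] r₀) (𝓝 0) := by
    have := (hcont.mono_left nhdsWithin_le_nhds).mul ((hslope.pow 2))
    simpa using this
  apply hmain.congr'
  have h1 : ∀ᶠ x in 𝓝[≠] r₀, x ∈ Ioi (0:ℝ) :=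
    eventually_nhdsWithin_of_eventually_nhds (isOpen_Ioi.eventually_mem hr₀)
  have h2 : ∀ᶠ x in 𝓝[≠] r₀, x ≠ r₀ := eventually_mem_nhdsWithin
  filter_upwards [h1, h2] with x hx0 hxr
  have hxr' : x - r₀ ≠ 0 := sub_ne_zero.2 hxr
  have hxp : (0:ℝ) < x := hx0
  have hsum : r₀ + x ≠ 0 := by positivity
  have hdiff : r₀ - x ≠ 0 := fun h => hxr (by linarith [sub_eq_zero.1 h])
  have hux : u x = slope u r₀ x * (x - r₀) := by
    rw [slope_def_field, hu0]
    field_simp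
    rw [sub_zero]
  rw [hux, ← hr₀2]
  have hden : r₀^2 - x^2 ≠ 0 := by
    intro h
    apply hdiff
    have : (r₀ - x) * (r₀ + x) = 0 := by nlinarith [h]
    rcases mul_eq_zero.1 this with h' | h'
    · exact h'
    · exact absurd h' hsum
  field_simp
  ring


lemma core {α n a L : ℝ} (hL : L = n + 2*α + 2) (haL : a * L = n)
    (ha0 : 0 < a) (ha1 : a < 1)
    {u u' : ℝ → ℝ}
    (hud : ∀ x ∈ Ioo (0:ℝ) 1, HasDerivAt u (u' x) x)
    (hu'c : ContinuousOn u' (Ioo (0:ℝ) 1))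
    (hu0 : u (Real.sqrt a) = 0)
    (hfi : IntegrableOn (fun x => (1 - x^2) * u' x ^2 * (1-x^2)^α * x^(n-1)
        - 2*L*(u x^2 * (1-x^2)^α * x^(n-1))) (Ioo (0:ℝ) 1)) :
    0 ≤ ∫ x in Ioo (0:ℝ) 1, ((1 - x^2) * u' x ^2 * (1-x^2)^α * x^(n-1)
        - 2*L*(u x^2 * (1-x^2)^α * x^(n-1))) := by
  have hr₀ : 0 < Real.sqrt a := Real.sqrt_pos.2 ha0
  have hr₀2 : Real.sqrt a ^ 2 = a := Real.sq_sqrt ha0.le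
  have hr₀1 : Real.sqrt a < 1 := by
    rw [Real.sqrt_lt' one_pos]; nlinarith
  set r₀ := Real.sqrt a
  set F : ℝ → ℝ := fun x => (1 - x^2) * u' x ^2 * (1-x^2)^α * x^(n-1)
      - 2*L*(u x^2 * (1-x^2)^α * x^(n-1)) with hF
  have hGlim : Tendsto (fun x => (1 - x^2)^(α+1) * x^(n-1) * ((-2*x)/(a - x^2)) * u x ^ 2)
      (𝓝[≠] r₀) (𝓝 0) := G_tendsto ha0 ha1 (hud r₀ ⟨hr₀, hr₀1⟩) hu0
  -- sign of G
  have hGsign_lt : ∀ x, 0 < x → x < r₀ →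
      (1 - x^2)^(α+1) * x^(n-1) * ((-2*x)/(a - x^2)) * u x ^ 2 ≤ 0 := by
    intro x hx0 hxr
    have hax : 0 < a - x^2 := by nlinarith
    have h1 : (0:ℝ) ≤ (1 - x^2)^(α+1) := Real.rpow_nonneg (by nlinarith) _
    have h2 : (0:ℝ) ≤ x^(n-1) := Real.rpow_nonneg hx0.le _
    have h3 : (-2*x)/(a - x^2) ≤ 0 := div_nonpos_iff.2 (Or.inr ⟨by linarith, hax.le⟩)
    have h4 := mul_nonneg h1 h2
    nlinarith [sq_nonneg (u x), mul_nonneg h4 (sq_nonneg (u x))]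
  have hGsign_gt : ∀ x, r₀ < x → x < 1 →
      0 ≤ (1 - x^2)^(α+1) * x^(n-1) * ((-2*x)/(a - x^2)) * u x ^ 2 := by
    intro x hxr hx1
    have hx0 : 0 < x := lt_trans hr₀ hxr
    have hax : a - x^2 < 0 := by nlinarith
    have h1 : (0:ℝ) ≤ (1 - x^2)^(α+1) := Real.rpow_nonneg (by nlinarith) _
    have h2 : (0:ℝ) ≤ x^(n-1) := Real.rpow_nonneg hx0.le _
    have h3 : 0 ≤ (-2*x)/(a - x^2) := div_nonneg_iff.2 (Or.inr ⟨by linarith, hax.le⟩)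
    exact mul_nonneg (mul_nonneg (mul_nonneg h1 h2) h3) (sq_nonneg (u x))
  -- sequences
  have hkpos : ∀ k : ℕ, (0:ℝ) < (k:ℝ) + 2 := by intro k; positivity
  have hk2 : ∀ k : ℕ, (2:ℝ) ≤ (k:ℝ) + 2 := by
    intro k; have : (0:ℝ) ≤ (k:ℝ) := Nat.cast_nonneg k; linarith
  have hdenomTop : Tendsto (fun k : ℕ => (k:ℝ) + 2) atTop atTop :=
    tendsto_atTop_add_const_right atTop 2 tendsto_natCast_atTop_atTop
  have hsm : ∀ c : ℝ, 0 ≤ c → ∀ k : ℕ, 2*(c/((k:ℝ)+2)) ≤ c := by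
    intro c hc k
    have h1 : c/((k:ℝ)+2) ≤ c/2 := by gcongr; exact hk2 k
    linarith
  have he1pos : ∀ k : ℕ, 0 < r₀ / ((k:ℝ)+2) := fun k => div_pos hr₀ (hkpos k)
  have he2pos : ∀ k : ℕ, 0 < (1-r₀) / ((k:ℝ)+2) := fun k => div_pos (by linarith) (hkpos k)
  have he1small := hsm r₀ hr₀.le
  have he2small := hsm (1-r₀) (by linarith)
  have he1lim : Tendsto (fun k : ℕ => r₀ / ((k:ℝ)+2)) atTop (𝓝 0) :=
    Tendsto.div_atTop tendsto_const_nhds hdenomTop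
  have he2lim : Tendsto (fun k : ℕ => (1-r₀) / ((k:ℝ)+2)) atTop (𝓝 0) :=
    Tendsto.div_atTop tendsto_const_nhds hdenomTop
  -- choice of k for union
  have hchoose : ∀ c : ℝ, 0 < c → ∀ m : ℝ, 0 < m → ∃ k : ℕ, c/((k:ℝ)+2) < m := by
    intro c hc m hm
    obtain ⟨k, hk⟩ := exists_nat_gt (c/m)
    refine ⟨k, ?_⟩
    rw [div_lt_iff₀ (hkpos k)]
    rw [div_lt_iff₀ hm] at hk
    nlinarith [hm]
  -- first half
  have half1 : 0 ≤ ∫ x in Ioo (0:ℝ) r₀, F x := by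
    set S : ℕ → Set ℝ := fun k => Ioc (r₀/((k:ℝ)+2)) (r₀ - r₀/((k:ℝ)+2)) with hS
    have hSm : ∀ k, MeasurableSet (S k) := fun k => measurableSet_Ioc
    have hmono : Monotone S := by
      intro k l hkl
      have hcast : ((k:ℝ)+2) ≤ ((l:ℝ)+2) := by
        have : (k:ℝ) ≤ (l:ℝ) := Nat.cast_le.2 hkl
        linarith
      have hmon : r₀/((l:ℝ)+2) ≤ r₀/((k:ℝ)+2) :=
        div_le_div_of_nonneg_left hr₀.le (hkpos k) hcast
      apply Ioc_subset_Ioc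
      · exact hmon
      · linarith
    have hUnion : (⋃ k, S k) = Ioo (0:ℝ) r₀ := by
      ext x
      simp only [mem_iUnion, hS, mem_Ioc, mem_Ioo]
      constructor
      · rintro ⟨k, h1, h2⟩
        have := he1pos k
        constructor
        · linarith
        · have := he1pos k; linarith
      · rintro ⟨hx0, hxr⟩
        have hm : 0 < min x (r₀ - x) := lt_min hx0 (by linarith)
        obtain ⟨k, hk⟩ := hchoose r₀ hr₀ _ hm
        have h1 : r₀/((k:ℝ)+2) < x := lt_of_lt_of_le hk (min_le_left _ _)
        have h2 : r₀/((k:ℝ)+2) < r₀ - x := lt_of_lt_of_le hk (min_le_right _ _)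
        exact ⟨k, h1, by linarith⟩
    have htendI : Tendsto (fun k => ∫ x in S k, F x) atTop (𝓝 (∫ x in Ioo (0:ℝ) r₀, F x)) := by
      have hfi' : IntegrableOn F (⋃ k, S k) := by
        rw [hUnion]
        exact hfi.mono_set (fun x hx => ⟨hx.1, lt_trans hx.2 hr₀1⟩)
      have := tendsto_setIntegral_of_monotone hSm hmono hfi'
      rwa [hUnion] at this
    have hineq : ∀ k : ℕ,
        (1 - (r₀ - r₀/((k:ℝ)+2))^2)^(α+1) * (r₀ - r₀/((k:ℝ)+2))^(n-1)
          * ((-2*(r₀ - r₀/((k:ℝ)+2)))/(a - (r₀ - r₀/((k:ℝ)+2))^2)) * u (r₀ - r₀/((k:ℝ)+2)) ^ 2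
        ≤ ∫ x in S k, F x := by
      intro k
      have he1p := he1pos k
      have he1s := he1small k
      have hst : r₀/((k:ℝ)+2) ≤ r₀ - r₀/((k:ℝ)+2) := by linarith
      have hsub : Icc (r₀/((k:ℝ)+2)) (r₀ - r₀/((k:ℝ)+2)) ⊆ Ioo (0:ℝ) 1 := by
        intro x hx
        rcases hx with ⟨h1, h2⟩
        exact ⟨lt_of_lt_of_le he1p h1, by nlinarith⟩
      have hne : ∀ x ∈ Icc (r₀/((k:ℝ)+2)) (r₀ - r₀/((k:ℝ)+2)), a - x^2 ≠ 0 := by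
        intro x hx
        rcases hx with ⟨h1, h2⟩
        have hx0 : 0 < x := lt_of_lt_of_le he1p h1
        have hxr : x < r₀ := by linarith
        have : 0 < a - x^2 := by nlinarith
        exact this.ne'
      have h := ftc_ineq hL haL hud hu'c hst hsub hne
      rw [intervalIntegral.integral_of_le hst] at h
      have hs' : ∫ x in Ioc (r₀/((k:ℝ)+2)) (r₀ - r₀/((k:ℝ)+2)), F x
          = ∫ x in S k, F x := by rw [hS]
      rw [hF] at hs'
      rw [hs'] at h
      have hGs := hGsign_lt (r₀/((k:ℝ)+2)) he1p (by linarith)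
      linarith
    have hlhs : Tendsto (fun k : ℕ =>
        (1 - (r₀ - r₀/((k:ℝ)+2))^2)^(α+1) * (r₀ - r₀/((k:ℝ)+2))^(n-1)
          * ((-2*(r₀ - r₀/((k:ℝ)+2)))/(a - (r₀ - r₀/((k:ℝ)+2))^2)) * u (r₀ - r₀/((k:ℝ)+2)) ^ 2)
        atTop (𝓝 0) := by
      apply hGlim.comp
      apply tendsto_nhdsWithin_of_tendsto_nhds_of_eventually_within
      · have h := (tendsto_const_nhds : Tendsto (fun _ : ℕ => r₀) atTop (𝓝 r₀)).sub he1lim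
        simpa using h
      · filter_upwards with k
        have := he1pos k
        simp only [mem_compl_iff, mem_singleton_iff]
        intro h
        linarith [h]
    exact le_of_tendsto_of_tendsto' hlhs htendI hineq
  -- second half
  have half2 : 0 ≤ ∫ x in Ioo r₀ (1:ℝ), F x := by
    set S : ℕ → Set ℝ := fun k => Ioc (r₀ + (1-r₀)/((k:ℝ)+2)) (1 - (1-r₀)/((k:ℝ)+2)) with hS
    have hSm : ∀ k, MeasurableSet (S k) := fun k => measurableSet_Ioc
    have hmono : Monotone S := by
      intro k l hkl
      have hcast : ((k:ℝ)+2) ≤ ((l:ℝ)+2) := by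
        have : (k:ℝ) ≤ (l:ℝ) := Nat.cast_le.2 hkl
        linarith
      have hmon : (1-r₀)/((l:ℝ)+2) ≤ (1-r₀)/((k:ℝ)+2) :=
        div_le_div_of_nonneg_left (by linarith) (hkpos k) hcast
      apply Ioc_subset_Ioc
      · linarith
      · linarith
    have hUnion : (⋃ k, S k) = Ioo r₀ (1:ℝ) := by
      ext x
      simp only [mem_iUnion, hS, mem_Ioc, mem_Ioo]
      constructor
      · rintro ⟨k, h1, h2⟩
        have := he2pos k
        exact ⟨by linarith, by linarith⟩
      · rintro ⟨hxr, hx1⟩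
        have hm : 0 < min (x - r₀) (1 - x) := lt_min (by linarith) (by linarith)
        obtain ⟨k, hk⟩ := hchoose (1-r₀) (by linarith) _ hm
        have h1 : (1-r₀)/((k:ℝ)+2) < x - r₀ := lt_of_lt_of_le hk (min_le_left _ _)
        have h2 : (1-r₀)/((k:ℝ)+2) < 1 - x := lt_of_lt_of_le hk (min_le_right _ _)
        exact ⟨k, by linarith, by linarith⟩
    have htendI : Tendsto (fun k => ∫ x in S k, F x) atTop (𝓝 (∫ x in Ioo r₀ (1:ℝ), F x)) := by
      have hfi' : IntegrableOn F (⋃ k, S k) := by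
        rw [hUnion]
        exact hfi.mono_set (fun x hx => ⟨lt_trans hr₀ hx.1, hx.2⟩)
      have := tendsto_setIntegral_of_monotone hSm hmono hfi'
      rwa [hUnion] at this
    have hineq : ∀ k : ℕ,
        -((1 - (r₀ + (1-r₀)/((k:ℝ)+2))^2)^(α+1) * (r₀ + (1-r₀)/((k:ℝ)+2))^(n-1)
          * ((-2*(r₀ + (1-r₀)/((k:ℝ)+2)))/(a - (r₀ + (1-r₀)/((k:ℝ)+2))^2))
          * u (r₀ + (1-r₀)/((k:ℝ)+2)) ^ 2)
        ≤ ∫ x in S k, F x := by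
      intro k
      have he2p := he2pos k
      have he2s := he2small k
      have hst : r₀ + (1-r₀)/((k:ℝ)+2) ≤ 1 - (1-r₀)/((k:ℝ)+2) := by linarith
      have hsub : Icc (r₀ + (1-r₀)/((k:ℝ)+2)) (1 - (1-r₀)/((k:ℝ)+2)) ⊆ Ioo (0:ℝ) 1 := by
        intro x hx
        rcases hx with ⟨h1, h2⟩
        exact ⟨by linarith, by linarith⟩
      have hne : ∀ x ∈ Icc (r₀ + (1-r₀)/((k:ℝ)+2)) (1 - (1-r₀)/((k:ℝ)+2)), a - x^2 ≠ 0 := by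
        intro x hx
        rcases hx with ⟨h1, h2⟩
        have hxr : r₀ < x := by linarith
        have hx1 : x < 1 := by linarith
        have : a - x^2 < 0 := by nlinarith
        exact this.ne
      have h := ftc_ineq hL haL hud hu'c hst hsub hne
      rw [intervalIntegral.integral_of_le hst] at h
      have hs' : ∫ x in Ioc (r₀ + (1-r₀)/((k:ℝ)+2)) (1 - (1-r₀)/((k:ℝ)+2)), F x
          = ∫ x in S k, F x := by rw [hS]
      rw [hF] at hs'
      rw [hs'] at h
      have hGt := hGsign_gt (1 - (1-r₀)/((k:ℝ)+2)) (by linarith) (by linarith)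
      linarith
    have hlhs : Tendsto (fun k : ℕ =>
        -((1 - (r₀ + (1-r₀)/((k:ℝ)+2))^2)^(α+1) * (r₀ + (1-r₀)/((k:ℝ)+2))^(n-1)
          * ((-2*(r₀ + (1-r₀)/((k:ℝ)+2)))/(a - (r₀ + (1-r₀)/((k:ℝ)+2))^2))
          * u (r₀ + (1-r₀)/((k:ℝ)+2)) ^ 2)) atTop (𝓝 0) := by
      have hcomp : Tendsto (fun k : ℕ =>
          (1 - (r₀ + (1-r₀)/((k:ℝ)+2))^2)^(α+1) * (r₀ + (1-r₀)/((k:ℝ)+2))^(n-1)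
          * ((-2*(r₀ + (1-r₀)/((k:ℝ)+2)))/(a - (r₀ + (1-r₀)/((k:ℝ)+2))^2))
          * u (r₀ + (1-r₀)/((k:ℝ)+2)) ^ 2) atTop (𝓝 0) := by
        apply hGlim.comp
        apply tendsto_nhdsWithin_of_tendsto_nhds_of_eventually_within
        · have h := (tendsto_const_nhds : Tendsto (fun _ : ℕ => r₀) atTop (𝓝 r₀)).add he2lim
          simpa using h
        · filter_upwards with k
          have := he2pos k
          simp only [mem_compl_iff, mem_singleton_iff]
          intro h
          linarith [h]
      have h := hcomp.neg
      simpa using h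
    exact le_of_tendsto_of_tendsto' hlhs htendI hineq
  -- combine the two halves
  have hIoc1 : IntegrableOn F (Ioc (0:ℝ) r₀) :=
    hfi.mono_set (fun x hx => ⟨hx.1, lt_of_le_of_lt hx.2 hr₀1⟩)
  have hIoc2 : IntegrableOn F (Ioc r₀ (1:ℝ)) := by
    apply IntegrableOn.congr_set_ae (t := Ioo r₀ (1:ℝ))
    · exact hfi.mono_set (fun x hx => ⟨lt_trans hr₀ hx.1, hx.2⟩)
    · exact (Ioo_ae_eq_Ioc (a := r₀) (b := (1:ℝ))).symm
  have hI1 : IntervalIntegrable F volume 0 r₀ :=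
    (intervalIntegrable_iff_integrableOn_Ioc_of_le hr₀.le).2 hIoc1
  have hI2 : IntervalIntegrable F volume r₀ 1 :=
    (intervalIntegrable_iff_integrableOn_Ioc_of_le hr₀1.le).2 hIoc2
  have hadd := intervalIntegral.integral_add_adjacent_intervals hI1 hI2
  have e1 : ∫ x in (0:ℝ)..r₀, F x = ∫ x in Ioo (0:ℝ) r₀, F x := by
    rw [intervalIntegral.integral_of_le hr₀.le, integral_Ioc_eq_integral_Ioo]
  have e2 : ∫ x in r₀..(1:ℝ), F x = ∫ x in Ioo r₀ (1:ℝ), F x := by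
    rw [intervalIntegral.integral_of_le hr₀1.le, integral_Ioc_eq_integral_Ioo]
  have e3 : ∫ x in (0:ℝ)..(1:ℝ), F x = ∫ x in Ioo (0:ℝ) (1:ℝ), F x := by
    rw [intervalIntegral.integral_of_le zero_le_one, integral_Ioc_eq_integral_Ioo]
  rw [e1, e2, e3] at hadd
  have : 0 ≤ ∫ x in Ioo (0:ℝ) 1, F x := by linarith
  exact this


/-- Radial weighted Poincaré inequality with mean-zero condition (mode k = 0). -/
theorem stmt10 (N : ℕ) (p : ℝ) (hN : 1 ≤ N) (hp1 : 1 < p)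
    (hpc : 2 ≤ N → p < 1 + 4 / ((N : ℝ) - 1))
    (v : ℝ → ℝ) (hv : ContDiffOn ℝ 1 v (Set.Ioo (0 : ℝ) 1))
    (hint1 : IntegrableOn
      (fun r => (1 - r ^ 2) * deriv v r ^ 2 * (1 - r ^ 2) ^ alphaExp N p *
        r ^ ((N : ℝ) - 1)) (Set.Ioo (0 : ℝ) 1))
    (hint2 : IntegrableOn
      (fun r => v r ^ 2 * (1 - r ^ 2) ^ alphaExp N p * r ^ ((N : ℝ) - 1))
      (Set.Ioo (0 : ℝ) 1))
    (hmean : (∫ r in Set.Ioo (0 : ℝ) 1,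
      v r * (1 - r ^ 2) ^ alphaExp N p * r ^ ((N : ℝ) - 1)) = 0) :
    2 * (3 * p + 1) / (p - 1) *
        ∫ r in Set.Ioo (0 : ℝ) 1,
          v r ^ 2 * (1 - r ^ 2) ^ alphaExp N p * r ^ ((N : ℝ) - 1)
      ≤ ∫ r in Set.Ioo (0 : ℝ) 1,
          (1 - r ^ 2) * deriv v r ^ 2 * (1 - r ^ 2) ^ alphaExp N p *
            r ^ ((N : ℝ) - 1) := by
  have hp : (0:ℝ) < p - 1 := by linarith
  obtain ⟨α, hαdef⟩ : ∃ α : ℝ, α = alphaExp N p := ⟨_, rfl⟩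
  rw [← hαdef] at hint1 hint2 hmean ⊢
  have hn1 : (1:ℝ) ≤ (N:ℝ) := by exact_mod_cast hN
  have halpha_eq : α = 2/(p-1) - ((N:ℝ)-1)/2 := hαdef
  have hα : 0 < α := by
    rw [halpha_eq]
    rcases Nat.lt_or_ge N 2 with h | h
    · have hN1 : N = 1 := by omega
      rw [hN1]
      have h20 : (0:ℝ) < 2/(p-1) := div_pos two_pos hp
      norm_num
      linarith
    · have hc := hpc h
      have hn2 : (2:ℝ) ≤ (N:ℝ) := by exact_mod_cast h
      have hd : (0:ℝ) < (N:ℝ) - 1 := by linarith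
      have hc' : p - 1 < 4 / ((N:ℝ)-1) := by linarith
      have h4 : ((N:ℝ)-1)*(p-1) < 4 := by
        calc ((N:ℝ)-1)*(p-1) < ((N:ℝ)-1)*(4/((N:ℝ)-1)) := mul_lt_mul_of_pos_left hc' hd
          _ = 4 := by field_simp
      rw [sub_pos, div_lt_div_iff₀ two_pos hp]
      linarith
  obtain ⟨L, hLdef⟩ : ∃ L : ℝ, L = (N:ℝ) + 2*α + 2 := ⟨_, rfl⟩
  have hLpos : 0 < L := by rw [hLdef]; linarith
  obtain ⟨a, hadef⟩ : ∃ a : ℝ, a = (N:ℝ) / L := ⟨_, rfl⟩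
  have haL : a * L = (N:ℝ) := by rw [hadef]; exact div_mul_cancel₀ _ hLpos.ne'
  have ha0 : 0 < a := by rw [hadef]; exact div_pos (by linarith) hLpos
  have ha1 : a < 1 := by
    rw [hadef]
    exact (div_lt_one hLpos).2 (by rw [hLdef]; linarith)
  have hlam : 2 * (3 * p + 1) / (p - 1) = 2 * L := by
    rw [hLdef, halpha_eq]
    field_simp
    ring
  obtain ⟨c, hcdef⟩ : ∃ c : ℝ, c = v (Real.sqrt a) := ⟨_, rfl⟩
  -- derivative facts
  have hdv : ∀ x ∈ Ioo (0:ℝ) 1, HasDerivAt v (deriv v x) x := by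
    intro x hx
    have hdiff : DifferentiableAt ℝ v x :=
      (hv.differentiableOn one_ne_zero).differentiableAt (isOpen_Ioo.mem_nhds hx)
    exact hdiff.hasDerivAt
  have hud : ∀ x ∈ Ioo (0:ℝ) 1, HasDerivAt (fun r => v r - c) (deriv v x) x :=
    fun x hx => (hdv x hx).sub_const c
  have hu'c : ContinuousOn (deriv v) (Ioo (0:ℝ) 1) := by
    have h1 : ContinuousOn (derivWithin v (Ioo (0:ℝ) 1)) (Ioo (0:ℝ) 1) :=
      hv.continuousOn_derivWithin isOpen_Ioo.uniqueDiffOn le_rfl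
    exact h1.congr fun x hx => (derivWithin_of_isOpen isOpen_Ioo hx).symm
  have hu0 : (fun r => v r - c) (Real.sqrt a) = 0 := by
    show v (Real.sqrt a) - c = 0
    rw [hcdef, sub_self]
  -- weight integrability
  have hwcont : ContinuousOn (fun x : ℝ => (1-x^2)^α * x^((N:ℝ)-1)) (Ioo (0:ℝ) 1) := by
    apply ContinuousOn.mul
    · apply ContinuousOn.rpow_const (by fun_prop)
      intro x hx
      have : (0:ℝ) < 1 - x^2 := by rcases hx with ⟨h1, h2⟩; nlinarith
      exact Or.inl this.ne'
    · apply ContinuousOn.rpow_const continuousOn_id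
      intro x hx
      exact Or.inl (ne_of_gt hx.1)
  have hw_int : IntegrableOn (fun x : ℝ => (1-x^2)^α * x^((N:ℝ)-1)) (Ioo (0:ℝ) 1) := by
    apply Integrable.mono' (g := fun _ : ℝ => (1:ℝ))
    · exact integrableOn_const (by rw [Real.volume_Ioo]; exact ENNReal.ofReal_ne_top) (by simp)
    · exact hwcont.aestronglyMeasurable measurableSet_Ioo
    · rw [ae_restrict_iff' measurableSet_Ioo]
      filter_upwards with x hx
      rcases hx with ⟨hx0, hx1⟩
      have hb0 : (0:ℝ) < 1 - x^2 := by nlinarith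
      have h1 : (1-x^2)^α ≤ 1 := Real.rpow_le_one hb0.le (by nlinarith) hα.le
      have h2 : x^((N:ℝ)-1) ≤ 1 := Real.rpow_le_one hx0.le hx1.le (by linarith)
      have h3 : (0:ℝ) ≤ (1-x^2)^α := Real.rpow_nonneg hb0.le _
      have h4 : (0:ℝ) ≤ x^((N:ℝ)-1) := Real.rpow_nonneg hx0.le _
      rw [Real.norm_eq_abs, abs_of_nonneg (mul_nonneg h3 h4)]
      calc (1-x^2)^α * x^((N:ℝ)-1) ≤ 1 * 1 := by
            apply mul_le_mul h1 h2 h4 (by norm_num)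
        _ = 1 := by norm_num
  -- integrability of v * w
  have hvw_int : IntegrableOn (fun r => v r * (1-r^2)^α * r^((N:ℝ)-1)) (Ioo (0:ℝ) 1) := by
    apply Integrable.mono'
      (g := fun r => (v r^2 * (1-r^2)^α * r^((N:ℝ)-1) + (1-r^2)^α * r^((N:ℝ)-1))/2)
    · exact (hint2.add hw_int).div_const 2
    · exact ((hv.continuousOn.mul (hwcont.mono (by intro x hx; exact hx)))
        |>.congr (fun x hx => by simp only [Pi.mul_apply]; ring)).aestronglyMeasurable measurableSet_Ioo
    · rw [ae_restrict_iff' measurableSet_Ioo]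
      filter_upwards with x hx
      rcases hx with ⟨hx0, hx1⟩
      have hb0 : (0:ℝ) < 1 - x^2 := by nlinarith
      have h3 : (0:ℝ) ≤ (1-x^2)^α := Real.rpow_nonneg hb0.le _
      have h4 : (0:ℝ) ≤ x^((N:ℝ)-1) := Real.rpow_nonneg hx0.le _
      have h5 : (0:ℝ) ≤ (1-x^2)^α * x^((N:ℝ)-1) := mul_nonneg h3 h4
      rw [Real.norm_eq_abs]
      have habs : |v x * (1-x^2)^α * x^((N:ℝ)-1)| = |v x| * ((1-x^2)^α * x^((N:ℝ)-1)) := by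
        rw [mul_assoc, abs_mul, abs_of_nonneg h5]
      rw [habs]
      have hv2 : 2 * |v x| ≤ v x^2 + 1 := by nlinarith [sq_nonneg (|v x| - 1), sq_abs (v x)]
      have key : 2 * |v x| * ((1-x^2)^α * x^((N:ℝ)-1))
          ≤ (v x^2 + 1) * ((1-x^2)^α * x^((N:ℝ)-1)) := mul_le_mul_of_nonneg_right hv2 h5
      have hexp : (v x^2 + 1) * ((1-x^2)^α * x^((N:ℝ)-1))
          = v x^2 * (1-x^2)^α * x^((N:ℝ)-1) + (1-x^2)^α * x^((N:ℝ)-1) := by ring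
      have hexp2 : 2 * |v x| * ((1-x^2)^α * x^((N:ℝ)-1))
          = 2 * (|v x| * ((1-x^2)^α * x^((N:ℝ)-1))) := by ring
      linarith
  -- integrability of u^2 * w
  have hu_sq_int : IntegrableOn (fun r => (v r - c)^2 * (1-r^2)^α * r^((N:ℝ)-1)) (Ioo (0:ℝ) 1) := by
    have h := ((hint2.sub (hvw_int.const_mul (2*c))).add (hw_int.const_mul (c^2)))
    apply h.congr
    filter_upwards with x
    simp only [Pi.add_apply, Pi.sub_apply]
    ring
  -- integrability of F
  have hF_int : IntegrableOn (fun x => (1 - x^2) * deriv v x ^2 * (1-x^2)^α * x^((N:ℝ)-1)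
      - 2*L*((v x - c)^2 * (1-x^2)^α * x^((N:ℝ)-1))) (Ioo (0:ℝ) 1) :=
    hint1.sub (hu_sq_int.const_mul (2*L))
  -- apply the core inequality
  have hcore : 0 ≤ ∫ x in Ioo (0:ℝ) 1, ((1 - x^2) * deriv v x ^2 * (1-x^2)^α * x^((N:ℝ)-1)
      - 2*L*((v x - c)^2 * (1-x^2)^α * x^((N:ℝ)-1))) := by
    have := core (u := fun r => v r - c) (u' := deriv v) hLdef haL ha0 ha1 hud hu'c hu0 hF_int
    exact this
  -- integral arithmetic
  have hsplit : (∫ x in Ioo (0:ℝ) 1, ((1 - x^2) * deriv v x ^2 * (1-x^2)^α * x^((N:ℝ)-1)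
      - 2*L*((v x - c)^2 * (1-x^2)^α * x^((N:ℝ)-1))))
      = (∫ x in Ioo (0:ℝ) 1, (1 - x^2) * deriv v x ^2 * (1-x^2)^α * x^((N:ℝ)-1))
        - 2*L * ∫ x in Ioo (0:ℝ) 1, (v x - c)^2 * (1-x^2)^α * x^((N:ℝ)-1) := by
    rw [integral_sub hint1 (hu_sq_int.const_mul (2*L)), integral_const_mul]
  have hexpand : (∫ x in Ioo (0:ℝ) 1, (v x - c)^2 * (1-x^2)^α * x^((N:ℝ)-1))
      = (∫ x in Ioo (0:ℝ) 1, v x^2 * (1-x^2)^α * x^((N:ℝ)-1))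
        - 2*c * (∫ x in Ioo (0:ℝ) 1, v x * (1-x^2)^α * x^((N:ℝ)-1))
        + c^2 * ∫ x in Ioo (0:ℝ) 1, (1-x^2)^α * x^((N:ℝ)-1) := by
    have h1 : (∫ x in Ioo (0:ℝ) 1, (v x - c)^2 * (1-x^2)^α * x^((N:ℝ)-1))
        = ∫ x in Ioo (0:ℝ) 1, (v x^2 * (1-x^2)^α * x^((N:ℝ)-1)
            - (2*c) * (v x * (1-x^2)^α * x^((N:ℝ)-1)) + c^2 * ((1-x^2)^α * x^((N:ℝ)-1))) := by
      apply integral_congr_ae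
      filter_upwards with x
      ring
    have hsub' : IntegrableOn (fun x => v x^2 * (1-x^2)^α * x^((N:ℝ)-1)
        - (2*c) * (v x * (1-x^2)^α * x^((N:ℝ)-1))) (Ioo (0:ℝ) 1) :=
      hint2.sub (hvw_int.const_mul (2*c))
    have hcm' : IntegrableOn (fun x => c^2 * ((1-x^2)^α * x^((N:ℝ)-1))) (Ioo (0:ℝ) 1) :=
      hw_int.const_mul (c^2)
    rw [h1, integral_add hsub' hcm', integral_sub hint2 (hvw_int.const_mul (2*c)),
      integral_const_mul, integral_const_mul]
    try ring
  have hw_nonneg : 0 ≤ ∫ x in Ioo (0:ℝ) 1, (1-x^2)^α * x^((N:ℝ)-1) := by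
    apply setIntegral_nonneg measurableSet_Ioo
    intro x hx
    rcases hx with ⟨hx0, hx1⟩
    have hb0 : (0:ℝ) < 1 - x^2 := by nlinarith
    exact mul_nonneg (Real.rpow_nonneg hb0.le _) (Real.rpow_nonneg hx0.le _)
  rw [hlam]
  have hmean' : (∫ x in Ioo (0:ℝ) 1, v x * (1-x^2)^α * x^((N:ℝ)-1)) = 0 := hmean
  rw [hmean'] at hexpand
  rw [hsplit, hexpand] at hcore
  have hc2 : 0 ≤ 2*L*(c^2 * ∫ x in Ioo (0:ℝ) 1, (1-x^2)^α * x^((N:ℝ)-1)) := by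
    apply mul_nonneg (by linarith) (mul_nonneg (sq_nonneg c) hw_nonneg)
  nlinarith [hcore, hc2]
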